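/- Let g > 0, Δx > 0, n ≥ 1, and let y₀ = 0 > y₁, y₂, …, yₙ be real numbers with yᵢ < 0 for 1 ≤ i ≤ n. Let f : [0, n·Δx] → ℝ be the continuous piecewise-linear function with f(i·Δx) = yᵢ for i = 0, …, n and f linear on each interval [i·Δx, (i+1)·Δx]. Then the (improper at 0) integral ∫₀^{n·Δx} √(1 + f'(x)²)/√(−2·g·f(x)) dx converges and equals Σᵢ₌₀^{n−1} t(uᵢ, yᵢ), where uᵢ = yᵢ₊₁ − yᵢ and t(u, y) = Δx/√(−2·g·y) if u = 0 and t(u, y) = √(2/g)·(√(Δx² + u²)/u)·(√(−y) − √(−(u + y))) if u ≠ 0. -/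

import Mathlib

open Set intervalIntegral


open MeasureTheory

/-- Travel time of a single linear segment of horizontal width `Δx` starting at height `y`
with vertical displacement `u`, under gravity `g`. -/
noncomputable def segTime (g Δx u y : ℝ) : ℝ :=
  if u = 0 then Δx / Real.sqrt (-2 * g * y)
  else Real.sqrt (2 / g) * (Real.sqrt (Δx ^ 2 + u ^ 2) / u) *
    (Real.sqrt (-y) - Real.sqrt (-(u + y)))

private lemma seg_alg (A B C m Δx s2 sg : ℝ) (h2 : s2 * s2 = 2) (hs2 : s2 ≠ 0) (hsg : sg ≠ 0)
    (hm : m ≠ 0) (hΔ : Δx ≠ 0) :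
    -(2 / m * (C / (s2 * sg))) * B - -(2 / m * (C / (s2 * sg))) * A =
      s2 * sg⁻¹ * (C * Δx / (m * Δx)) * (A - B) := by
  field_simp
  linear_combination (-(C * (A - B))) * h2

lemma seg_key (g Δx m Y a : ℝ) (hg : 0 < g) (hΔx : 0 < Δx)
    (hY : Y ≤ 0) (hY' : Y + m * Δx < 0) :
    IntervalIntegrable (fun x => Real.sqrt (1 + m ^ 2) / Real.sqrt (-2 * g * (Y + m * (x - a))))
      volume a (a + Δx) ∧
    (∫ x in a..(a + Δx), Real.sqrt (1 + m ^ 2) / Real.sqrt (-2 * g * (Y + m * (x - a)))) =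
      segTime g Δx (m * Δx) Y := by
  have hab : a ≤ a + Δx := by linarith
  have hPos : ∀ x ∈ Ioo a (a + Δx), 0 < -2 * g * (Y + m * (x - a)) := by
    intro x hx
    have hs1 : 0 < x - a := by linarith [hx.1]
    have hs2 : x - a < Δx := by linarith [hx.2]
    have h1 : Y * (Δx - (x - a)) ≤ 0 :=
      mul_nonpos_of_nonpos_of_nonneg hY (by linarith)
    have h2 : (Y + m * Δx) * (x - a) < 0 := mul_neg_of_neg_of_pos hY' hs1
    have hneg : Y + m * (x - a) < 0 := by nlinarith
    nlinarith
  rcases eq_or_ne m 0 with hm | hm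
  · -- constant integrand
    subst hm
    have hYlt : Y < 0 := by linarith [hY']
    have hconst : (fun x : ℝ => Real.sqrt (1 + (0:ℝ) ^ 2) / Real.sqrt (-2 * g * (Y + 0 * (x - a))))
        = fun _ : ℝ => Δx⁻¹ * (Δx / Real.sqrt (-2 * g * Y)) := by
      funext x
      have h1 : Real.sqrt (1 + (0:ℝ) ^ 2) = 1 := by norm_num
      rw [h1]
      field_simp
      simp
    rw [hconst]
    refine ⟨intervalIntegrable_const, ?_⟩
    rw [intervalIntegral.integral_const]
    simp only [add_sub_cancel_left, smul_eq_mul, segTime, zero_mul, if_pos]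
    field_simp
  · -- FTC case
    have hmΔx : m * Δx ≠ 0 := mul_ne_zero hm hΔx.ne'
    set C := Real.sqrt (1 + m ^ 2) with hC
    set K := (2 / m) * (C / Real.sqrt (2 * g)) with hK
    set F := fun x : ℝ => -K * Real.sqrt (-(Y + m * (x - a))) with hF
    have h2g : (0:ℝ) < 2 * g := by linarith
    have hsqrt2g : 0 < Real.sqrt (2 * g) := Real.sqrt_pos.2 h2g
    have hsplit : ∀ x : ℝ, -2 * g * (Y + m * (x - a)) = 2 * g * (-(Y + m * (x - a))) := by
      intro x; ring
    have hderiv : ∀ x ∈ Ioo a (a + Δx),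
        HasDerivWithinAt F (C / Real.sqrt (-2 * g * (Y + m * (x - a)))) (Ioi x) x := by
      intro x hx
      have hPx : 0 < -(Y + m * (x - a)) := by
        have := hPos x hx; nlinarith
      have h1 : HasDerivAt (fun z : ℝ => -(Y + m * (z - a))) (-(m * 1)) x :=
        ((((hasDerivAt_id x).sub_const a).const_mul m).const_add Y).neg
      have h2 : HasDerivAt (fun z : ℝ => Real.sqrt (-(Y + m * (z - a))))
          (1 / (2 * Real.sqrt (-(Y + m * (x - a)))) * -(m * 1)) x :=
        (Real.hasDerivAt_sqrt hPx.ne').comp x h1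
      have h3 := h2.const_mul (-K)
      have heq : -K * (1 / (2 * Real.sqrt (-(Y + m * (x - a)))) * -(m * 1))
          = C / Real.sqrt (-2 * g * (Y + m * (x - a))) := by
        rw [hsplit, Real.sqrt_mul h2g.le, hK]
        have hs : 0 < Real.sqrt (-(Y + m * (x - a))) := Real.sqrt_pos.2 hPx
        field_simp
      rw [heq] at h3
      exact h3.hasDerivWithinAt
    have hcontF : ContinuousOn F (Icc a (a + Δx)) := by
      apply Continuous.continuousOn
      have h : Continuous fun x : ℝ => -(Y + m * (x - a)) := by fun_prop
      exact continuous_const.mul (Real.continuous_sqrt.comp h)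
    have hint : IntervalIntegrable
        (fun x => Real.sqrt (1 + m ^ 2) / Real.sqrt (-2 * g * (Y + m * (x - a))))
        volume a (a + Δx) := by
      rcases eq_or_lt_of_le hY with hY0 | hYlt
      · -- Y = 0 : singular at the left endpoint
        subst hY0
        have hmneg : m < 0 := by nlinarith
        have h2gm : (0:ℝ) < -2 * g * m := by nlinarith
        have base : IntervalIntegrable (fun s : ℝ => s ^ (-(1/2) : ℝ)) volume 0 Δx :=
          intervalIntegral.intervalIntegrable_rpow' (by norm_num)
        have b2 := (base.const_mul (C / Real.sqrt (-2 * g * m))).comp_sub_right a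
        have b3 : IntervalIntegrable
            (fun x : ℝ => C / Real.sqrt (-2 * g * m) * (x - a) ^ (-(1/2) : ℝ))
            volume a (a + Δx) := by
          simpa [add_comm] using b2
        refine b3.congr_ae ?_
        rw [uIoc_of_le hab]
        filter_upwards [ae_restrict_mem measurableSet_Ioc] with x hx
        have hs : 0 < x - a := by linarith [hx.1]
        have hrw : -2 * g * (0 + m * (x - a)) = (-2 * g * m) * (x - a) := by ring
        rw [hrw, Real.sqrt_mul h2gm.le, Real.rpow_neg hs.le, ← Real.sqrt_eq_rpow, hC]
        field_simp
      · -- Y < 0 : continuous on the closed interval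
        have hposIcc : ∀ x ∈ Icc a (a + Δx), 0 < -2 * g * (Y + m * (x - a)) := by
          intro x hx
          have hs1 : 0 ≤ x - a := by linarith [hx.1]
          have hs2 : x - a ≤ Δx := by linarith [hx.2]
          have hneg : Y + m * (x - a) < 0 := by
            rcases le_or_gt 0 m with h | h
            · nlinarith
            · nlinarith
          nlinarith
        apply ContinuousOn.intervalIntegrable
        rw [uIcc_of_le hab]
        apply ContinuousOn.div continuousOn_const
        · have : Continuous fun x : ℝ => -2 * g * (Y + m * (x - a)) := by fun_prop
          exact (Real.continuous_sqrt.comp this).continuousOn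
        · intro x hx
          exact (Real.sqrt_pos.2 (hposIcc x hx)).ne'
    refine ⟨hint, ?_⟩
    rw [integral_eq_sub_of_hasDeriv_right_of_le hab hcontF hderiv hint]
    have hFb : F (a + Δx) = -K * Real.sqrt (-(m * Δx + Y)) := by
      have e1 : -(Y + m * (a + Δx - a)) = -(m * Δx + Y) := by ring
      simp only [hF]; rw [e1]
    have hFa : F a = -K * Real.sqrt (-Y) := by
      have e2 : -(Y + m * (a - a)) = -Y := by ring
      simp only [hF]; rw [e2]
    rw [hFb, hFa]
    unfold segTime
    rw [if_neg hmΔx]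
    have hsq : Real.sqrt (Δx ^ 2 + (m * Δx) ^ 2) = C * Δx := by
      have h1 : Δx ^ 2 + (m * Δx) ^ 2 = (1 + m ^ 2) * Δx ^ 2 := by ring
      rw [h1, Real.sqrt_mul (by positivity), Real.sqrt_sq hΔx.le, hC]
    rw [hsq]
    have h2 : Real.sqrt 2 * Real.sqrt 2 = 2 := Real.mul_self_sqrt (by norm_num)
    have hg2 : Real.sqrt (2 * g) = Real.sqrt 2 * Real.sqrt g := Real.sqrt_mul (by norm_num) g
    have h2g' : Real.sqrt (2 / g) = Real.sqrt 2 * (Real.sqrt g)⁻¹ := by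
      rw [div_eq_mul_inv, Real.sqrt_mul (by norm_num), Real.sqrt_inv]
    have hsg : (0:ℝ) < Real.sqrt g := Real.sqrt_pos.2 hg
    have hs2' : (0:ℝ) < Real.sqrt 2 := Real.sqrt_pos.2 (by norm_num)
    rw [hK, h2g', hg2]
    exact seg_alg _ _ _ _ _ _ _ h2 hs2'.ne' hsg.ne' hm hΔx.ne'

/-- Total descent time along a continuous piecewise-linear path through the grid points
`(i·Δx, yᵢ)` with `y₀ = 0` and `yᵢ < 0` for `1 ≤ i ≤ n`: the (improper at `0`) integral
`∫₀^{n·Δx} √(1 + f' x ^ 2)/√(-2·g·f x) dx` converges and equals the sum of the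
segment times `t(uᵢ, yᵢ)` with `uᵢ = yᵢ₊₁ - yᵢ`. -/
theorem piecewise_linear_descent_time (g Δx : ℝ) (n : ℕ) (hg : 0 < g) (hΔx : 0 < Δx)
    (hn : 1 ≤ n) (y : ℕ → ℝ) (hy0 : y 0 = 0)
    (hyneg : ∀ i, 1 ≤ i → i ≤ n → y i < 0)
    (f : ℝ → ℝ)
    (hf : ∀ i < n, ∀ x ∈ Set.Icc ((i : ℝ) * Δx) (((i : ℝ) + 1) * Δx),
      f x = y i + ((y (i + 1) - y i) / Δx) * (x - (i : ℝ) * Δx)) :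
    IntervalIntegrable
      (fun x => Real.sqrt (1 + (deriv f x) ^ 2) / Real.sqrt (-2 * g * f x))
      volume 0 ((n : ℝ) * Δx) ∧
    (∫ x in (0 : ℝ)..((n : ℝ) * Δx),
        Real.sqrt (1 + (deriv f x) ^ 2) / Real.sqrt (-2 * g * f x)) =
      ∑ i ∈ Finset.range n, segTime g Δx (y (i + 1) - y i) (y i) := by
  set φ := fun x => Real.sqrt (1 + (deriv f x) ^ 2) / Real.sqrt (-2 * g * f x) with hφ
  have key : ∀ i < n,
      IntervalIntegrable φ volume (((i : ℕ) : ℝ) * Δx) (((i + 1 : ℕ) : ℝ) * Δx) ∧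
      (∫ x in (((i : ℕ) : ℝ) * Δx)..(((i + 1 : ℕ) : ℝ) * Δx), φ x) =
        segTime g Δx (y (i + 1) - y i) (y i) := by
    intro i hi
    set m := (y (i + 1) - y i) / Δx with hm
    set A := ((i : ℕ) : ℝ) * Δx with hA
    have hAB : ((i + 1 : ℕ) : ℝ) * Δx = A + Δx := by rw [hA]; push_cast; ring
    have hAB2 : A + Δx = ((i : ℝ) + 1) * Δx := by rw [hA]; ring
    have hY : y i ≤ 0 := by
      rcases Nat.eq_zero_or_pos i with h0 | h0
      · rw [h0, hy0]
      · exact (hyneg i h0 hi.le).le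
    have hmdx : m * Δx = y (i + 1) - y i := by rw [hm]; field_simp
    have hY' : y i + m * Δx < 0 := by
      rw [hmdx]
      have := hyneg (i + 1) (Nat.succ_le_succ (Nat.zero_le _)) hi
      linarith
    obtain ⟨H1, H2⟩ := seg_key g Δx m (y i) A hg hΔx hY hY'
    have hab : A ≤ A + Δx := by linarith
    have hae : (fun x => Real.sqrt (1 + m ^ 2) / Real.sqrt (-2 * g * (y i + m * (x - A))))
        =ᵐ[volume.restrict (Set.uIoc A (A + Δx))] φ := by
      rw [Set.uIoc_of_le hab,
        ← MeasureTheory.Measure.restrict_congr_set MeasureTheory.Ioo_ae_eq_Ioc]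
      filter_upwards [ae_restrict_mem measurableSet_Ioo] with x hx
      have hmem : x ∈ Set.Icc ((i : ℝ) * Δx) (((i : ℝ) + 1) * Δx) := by
        constructor
        · exact hx.1.le
        · have := hx.2; rw [hAB2] at this; exact this.le
      have hfx : f x = y i + m * (x - A) := hf i hi x hmem
      have hder : deriv f x = m := by
        have hev : f =ᶠ[nhds x] fun z => y i + m * (z - A) := by
          filter_upwards [Ioo_mem_nhds hx.1 hx.2] with z hz
          refine hf i hi z ⟨hz.1.le, ?_⟩
          have := hz.2; rw [hAB2] at this; exact this.le
        rw [hev.deriv_eq]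
        have h1 : HasDerivAt (fun z : ℝ => y i + m * (z - A)) (m * 1) x :=
          (((hasDerivAt_id x).sub_const A).const_mul m).const_add (y i)
        simpa using h1.deriv
      rw [hφ]; simp only; rw [hder, hfx]
    have Hint : IntervalIntegrable φ volume A (A + Δx) := H1.congr_ae hae
    have h' := (ae_restrict_iff' measurableSet_uIoc).1 hae
    have Hval : (∫ x in A..(A + Δx), φ x) = segTime g Δx (y (i + 1) - y i) (y i) := by
      rw [← intervalIntegral.integral_congr_ae h', H2, hmdx]
    rw [hAB]
    exact ⟨Hint, Hval⟩
  constructor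
  · have h := IntervalIntegrable.trans_iterate (a := fun k : ℕ => ((k : ℕ) : ℝ) * Δx)
      (f := φ) (μ := volume) (n := n) (fun k hk => (key k hk).1)
    simpa using h
  · have hsum := intervalIntegral.sum_integral_adjacent_intervals
      (a := fun k : ℕ => ((k : ℕ) : ℝ) * Δx) (f := φ) (μ := volume) (n := n)
      (fun k hk => (key k hk).1)
    have hsum2 : (∑ i ∈ Finset.range n, segTime g Δx (y (i + 1) - y i) (y i))
        = ∑ k ∈ Finset.range n, ∫ x in (((k : ℕ) : ℝ) * Δx)..(((k + 1 : ℕ) : ℝ) * Δx), φ x :=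
      Finset.sum_congr rfl fun i hi => ((key i (Finset.mem_range.1 hi)).2).symm
    rw [hsum2, hsum]
    simp
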